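/- Let $0 < \alpha < 2 < \beta$ and $A, B, C > 0$. Consider $f(s) = s^2 A - s^{\alpha} C - s^{\beta} B$ on $(0,\infty)$. Set $\mu_* = \max_{s>0}\left(s^{2-\alpha}A - s^{\beta-\alpha}B\right)$. Then: (i) if $C < \mu_*$, the equation $f(s)=0$ has exactly two positive solutions $t^+ < s_* < t^-$, where $s_* = \left(\frac{(2-\alpha)A}{(\beta-\alpha)B}\right)^{1/(\beta-2)}$; (ii) if $C = \mu_*$, then $f(s)=0$ has exactly one positive solution $s = s_*$; (iii) if $C > \mu_*$, then $f(s)=0$ has no positive solution. -/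

import Mathlib

open Real Set

theorem stmt1 (α β A B C : ℝ) (hα : 0 < α) (hα2 : α < 2) (hβ : 2 < β)
    (hA : 0 < A) (hB : 0 < B) (hC : 0 < C) :
    let f : ℝ → ℝ := fun s => s ^ (2 : ℝ) * A - s ^ α * C - s ^ β * B
    let μstar : ℝ := sSup ((fun s : ℝ => s ^ (2 - α) * A - s ^ (β - α) * B) '' Ioi 0)
    let sstar : ℝ := ((2 - α) * A / ((β - α) * B)) ^ (1 / (β - 2))
    (C < μstar → ∃ tp tm : ℝ, 0 < tp ∧ tp < sstar ∧ sstar < tm ∧ f tp = 0 ∧ f tm = 0 ∧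
        ∀ s, 0 < s → f s = 0 → s = tp ∨ s = tm) ∧
    (C = μstar → ∀ s, 0 < s → (f s = 0 ↔ s = sstar)) ∧
    (C > μstar → ∀ s, 0 < s → f s ≠ 0) := by
  intro f μstar sstar
  set g : ℝ → ℝ := fun s => s ^ (2 - α) * A - s ^ (β - α) * B with hg
  have hβ2 : (0:ℝ) < β - 2 := by linarith
  have h2α : (0:ℝ) < 2 - α := by linarith
  have hβα : (0:ℝ) < β - α := by linarith
  have hden : 0 < (β - α) * B := by positivity
  have hnum : 0 < (2 - α) * A := by positivity
  have hbase : 0 < (2 - α) * A / ((β - α) * B) := by positivity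
  have hsstar : 0 < sstar := Real.rpow_pos_of_pos hbase _
  have hsstar_pow : sstar ^ (β - 2) = (2 - α) * A / ((β - α) * B) := by
    show (((2 - α) * A / ((β - α) * B)) ^ (1 / (β - 2))) ^ (β - 2) = _
    rw [← Real.rpow_mul hbase.le, one_div_mul_cancel hβ2.ne', Real.rpow_one]
  -- derivative of g
  have hderiv : ∀ s : ℝ, 0 < s → HasDerivAt g
      (s ^ (1 - α) * ((2 - α) * A - (β - α) * B * s ^ (β - 2))) s := by
    intro s hs
    have h1 : HasDerivAt (fun x : ℝ => x ^ (2 - α)) ((2 - α) * s ^ (2 - α - 1)) s :=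
      Real.hasDerivAt_rpow_const (Or.inl hs.ne')
    have h2 : HasDerivAt (fun x : ℝ => x ^ (β - α)) ((β - α) * s ^ (β - α - 1)) s :=
      Real.hasDerivAt_rpow_const (Or.inl hs.ne')
    have h := (h1.mul_const A).sub (h2.mul_const B)
    refine h.congr_deriv ?_
    have e1 : s ^ (2 - α - 1) = s ^ (1 - α) := by
      rw [show (2 - α - 1 : ℝ) = 1 - α by ring]
    have e2 : s ^ (β - α - 1) = s ^ (1 - α) * s ^ (β - 2) := by
      rw [← Real.rpow_add hs]; congr 1; ring
    rw [e1, e2]; ring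
  have hcont : ∀ x : ℝ, 0 < x → ContinuousAt g x := by
    intro x hx
    exact ((Real.continuousAt_rpow_const x _ (Or.inl hx.ne')).mul continuousAt_const).sub
      ((Real.continuousAt_rpow_const x _ (Or.inl hx.ne')).mul continuousAt_const)
  -- strict monotonicity on (0, sstar]
  have hmono : StrictMonoOn g (Ioc 0 sstar) := by
    apply strictMonoOn_of_deriv_pos (convex_Ioc _ _)
      (fun x hx => (hcont x hx.1).continuousWithinAt)
    intro x hx
    rw [interior_Ioc] at hx
    rw [(hderiv x hx.1).deriv]
    apply mul_pos (Real.rpow_pos_of_pos hx.1 _)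
    have hlt : x ^ (β - 2) < sstar ^ (β - 2) := Real.rpow_lt_rpow hx.1.le hx.2 hβ2
    rw [hsstar_pow] at hlt
    have := (lt_div_iff₀ hden).mp hlt
    nlinarith
  -- strict antitonicity on [sstar, ∞)
  have hanti : StrictAntiOn g (Ici sstar) := by
    apply strictAntiOn_of_deriv_neg (convex_Ici _)
      (fun x hx => (hcont x (lt_of_lt_of_le hsstar hx)).continuousWithinAt)
    intro x hx
    rw [interior_Ici] at hx
    have hxpos : 0 < x := lt_trans hsstar hx
    rw [(hderiv x hxpos).deriv]
    apply mul_neg_of_pos_of_neg (Real.rpow_pos_of_pos hxpos _)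
    have hlt : sstar ^ (β - 2) < x ^ (β - 2) := Real.rpow_lt_rpow hsstar.le hx hβ2
    rw [hsstar_pow] at hlt
    have := (div_lt_iff₀ hden).mp hlt
    nlinarith
  have hmax : ∀ s, 0 < s → s ≠ sstar → g s < g sstar := by
    intro s hs hne
    rcases lt_or_gt_of_ne hne with h | h
    · exact hmono ⟨hs, h.le⟩ ⟨hsstar, le_refl _⟩ h
    · exact hanti self_mem_Ici h.le h
  have hμ : μstar = g sstar := by
    refine IsGreatest.csSup_eq ⟨⟨sstar, hsstar, rfl⟩, ?_⟩
    rintro y ⟨s, hs, rfl⟩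
    rcases eq_or_ne s sstar with h | h
    · rw [h]
    · exact (hmax s hs h).le
  -- f s = s^α (g s - C)
  have hf : ∀ s : ℝ, 0 < s → f s = s ^ α * (g s - C) := by
    intro s hs
    have e1 : s ^ α * s ^ (2 - α) = s ^ (2 : ℝ) := by
      rw [← Real.rpow_add hs]; norm_num
    have e2 : s ^ α * s ^ (β - α) = s ^ β := by
      rw [← Real.rpow_add hs]; congr 1; ring
    show s ^ (2 : ℝ) * A - s ^ α * C - s ^ β * B = _
    rw [hg]
    simp only
    rw [← e1, ← e2]; ring
  have hroot : ∀ s : ℝ, 0 < s → (f s = 0 ↔ g s = C) := by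
    intro s hs
    rw [hf s hs, mul_eq_zero]
    constructor
    · rintro (h | h)
      · exact absurd h (Real.rpow_pos_of_pos hs α).ne'
      · linarith
    · intro h; right; rw [h]; ring
  refine ⟨?_, ?_, ?_⟩
  · -- case C < μstar
    intro hCμ
    rw [hμ] at hCμ
    -- small point with g < C
    set ε : ℝ := (C / A) ^ (1 / (2 - α)) with hε
    have hεpos : 0 < ε := Real.rpow_pos_of_pos (by positivity) _
    have hεpow : ε ^ (2 - α) = C / A := by
      rw [hε, ← Real.rpow_mul (by positivity : (0:ℝ) ≤ C / A),
        one_div_mul_cancel h2α.ne', Real.rpow_one]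
    set s₀ : ℝ := min sstar ε / 2 with hs₀def
    have hs₀pos : 0 < s₀ := by
      have := lt_min hsstar hεpos
      positivity
    have hs₀lt : s₀ < sstar := lt_of_lt_of_le (by
      have := lt_min hsstar hεpos
      linarith [min_le_left sstar ε]) (le_refl _)
    have hs₀ε : s₀ < ε := by
      have := lt_min hsstar hεpos
      have := min_le_right sstar ε
      rw [hs₀def]; linarith
    have hgs0 : g s₀ < C := by
      have h1 : s₀ ^ (2 - α) < C / A := by
        rw [← hεpow]; exact Real.rpow_lt_rpow hs₀pos.le hs₀ε h2α
      have h2 : s₀ ^ (2 - α) * A < C := (lt_div_iff₀ hA).mp h1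
      have h3 : 0 < s₀ ^ (β - α) * B := mul_pos (Real.rpow_pos_of_pos hs₀pos _) hB
      rw [hg]; simp only; linarith
    have hcontIcc : ContinuousOn g (Icc s₀ sstar) :=
      fun x hx => (hcont x (lt_of_lt_of_le hs₀pos hx.1)).continuousWithinAt
    obtain ⟨tp, htp_mem, htp⟩ := intermediate_value_Ioo hs₀lt.le hcontIcc ⟨hgs0, hCμ⟩
    -- large point with g < C
    set r : ℝ := (A / B) ^ (1 / (β - 2)) with hr
    have hrpos : 0 < r := Real.rpow_pos_of_pos (by positivity) _
    have hrpow : r ^ (β - 2) = A / B := by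
      rw [hr, ← Real.rpow_mul (by positivity : (0:ℝ) ≤ A / B),
        one_div_mul_cancel hβ2.ne', Real.rpow_one]
    set s₁ : ℝ := max sstar r + 1 with hs₁def
    have hs₁gt : sstar < s₁ := lt_of_le_of_lt (le_max_left _ _) (by rw [hs₁def]; linarith)
    have hs₁r : r < s₁ := lt_of_le_of_lt (le_max_right _ _) (by rw [hs₁def]; linarith)
    have hs₁pos : 0 < s₁ := lt_trans hsstar hs₁gt
    have hgs1 : g s₁ < C := by
      have e : s₁ ^ (β - α) = s₁ ^ (2 - α) * s₁ ^ (β - 2) := by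
        rw [← Real.rpow_add hs₁pos]; congr 1; ring
      have h1 : A / B < s₁ ^ (β - 2) := by
        rw [← hrpow]; exact Real.rpow_lt_rpow hrpos.le hs₁r hβ2
      have h2 : A < s₁ ^ (β - 2) * B := (div_lt_iff₀ hB).mp h1
      rw [hg]; simp only; rw [e]
      nlinarith [Real.rpow_pos_of_pos hs₁pos (2 - α)]
    have hcontIcc2 : ContinuousOn g (Icc sstar s₁) :=
      fun x hx => (hcont x (lt_of_lt_of_le hsstar hx.1)).continuousWithinAt
    obtain ⟨tm, htm_mem, htm⟩ := intermediate_value_Ioo' hs₁gt.le hcontIcc2 ⟨hgs1, hCμ⟩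
    refine ⟨tp, tm, lt_trans hs₀pos htp_mem.1, htp_mem.2, htm_mem.1, ?_, ?_, ?_⟩
    · exact (hroot tp (lt_trans hs₀pos htp_mem.1)).mpr htp
    · exact (hroot tm (lt_trans hsstar htm_mem.1)).mpr htm
    · intro s hs hfs
      have hgsC := (hroot s hs).mp hfs
      rcases lt_trichotomy s sstar with h | h | h
      · left
        exact hmono.injOn ⟨hs, h.le⟩ ⟨lt_trans hs₀pos htp_mem.1, htp_mem.2.le⟩
          (htp ▸ hgsC)
      · exfalso; rw [h] at hgsC; linarith
      · right
        exact hanti.injOn h.le htm_mem.1.le (htm ▸ hgsC)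
  · -- case C = μstar
    intro hCeq s hs
    rw [hroot s hs]
    constructor
    · intro h
      by_contra hne
      have hlt := hmax s hs hne
      rw [h, hCeq, hμ] at hlt
      exact lt_irrefl _ hlt
    · intro h; rw [h, ← hμ, ← hCeq]
  · -- case C > μstar
    intro hCgt s hs hfs
    have hgsC := (hroot s hs).mp hfs
    have hle : g s ≤ g sstar := by
      rcases eq_or_ne s sstar with h | h
      · rw [h]
      · exact (hmax s hs h).le
    rw [← hμ, hgsC] at hle
    linarith
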